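/- Let (E, ℰ) be a measurable space and X_1, …, X_N (N ≥ 1) independent E-valued random variables with X_k distributed according to a probability measure μ_k. Let h_1, …, h_N : E → ℝ be measurable functions with ∫_E h_k dμ_k = 0 for every k and σ(h) < ∞. Then for every ε ≥ 0, E[ exp(ε √N |m(X)(h)|) ] ≤ 1 + ε σ(h) ( 1 − √(π/2) + √(π/2) · e^{ε² σ²(h)/8} · [1 + erf(ε σ(h)/√8)] ). -/

import Mathlib

open MeasureTheory ProbabilityTheory Real

/-- The oscillation of a real-valued function: `sup {|h x - h y| : x y}`. -/
noncomputable def osc {E : Type*} (h : E → ℝ) : ℝ :=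
  ⨆ q : E × E, |h q.1 - h q.2|

/-- The error function `erf(x) = (2/√π) ∫₀ˣ exp(−t²) dt`. -/
noncomputable def erf (x : ℝ) : ℝ :=
  (2 / Real.sqrt Real.pi) * ∫ t in (0:ℝ)..x, Real.exp (-t ^ 2)

section AuxScalar

theorem aux_hoeffding_core {p : ℝ} (hp0 : 0 ≤ p) (hp1 : p ≤ 1) (x : ℝ) :
    (1 - p) * Real.exp (-(p * x)) + p * Real.exp ((1 - p) * x) ≤ Real.exp (x ^ 2 / 8) := by
  have hg : ∀ y : ℝ, 0 < 1 - p + p * Real.exp y := fun y => by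
    rcases eq_or_lt_of_le hp1 with h | h
    · subst h; simpa using Real.exp_pos y
    · nlinarith [mul_nonneg hp0 (Real.exp_pos y).le]
  set g : ℝ → ℝ := fun y => 1 - p + p * Real.exp y with hgdef
  have hgd : ∀ y : ℝ, HasDerivAt g (p * Real.exp y) y := fun y => by
    exact ((Real.hasDerivAt_exp y).const_mul p).const_add (1 - p)
  set F : ℝ → ℝ := fun y => y ^ 2 / 8 - (Real.log (g y) - p * y) with hFdef
  set F' : ℝ → ℝ := fun y => y / 4 - (p * Real.exp y / g y - p) with hF'def
  have hFd : ∀ y, HasDerivAt F (F' y) y := fun y => by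
    have h1 : HasDerivAt (fun y : ℝ => y ^ 2 / 8) (y / 4) y := by
      have := (hasDerivAt_pow 2 y).div_const 8
      simpa [pow_one] using this.congr_deriv (by ring)
    have h2 : HasDerivAt (fun y => Real.log (g y)) (p * Real.exp y / g y) y :=
      (hgd y).log (hg y).ne'
    have h3 : HasDerivAt (fun y : ℝ => p * y) p y := by
      simpa using (hasDerivAt_id y).const_mul p
    exact h1.sub (h2.sub h3)
  have hF'd : ∀ y, HasDerivAt F'
      (1 / 4 - (p * Real.exp y * g y - p * Real.exp y * (p * Real.exp y)) / g y ^ 2) y := fun y => by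
    have h1 : HasDerivAt (fun y : ℝ => y / 4) (1 / 4) y := by
      simpa using (hasDerivAt_id y).div_const 4
    have h2 : HasDerivAt (fun y => p * Real.exp y) (p * Real.exp y) y :=
      (Real.hasDerivAt_exp y).const_mul p
    have h3 : HasDerivAt (fun y => p * Real.exp y / g y)
        ((p * Real.exp y * g y - p * Real.exp y * (p * Real.exp y)) / g y ^ 2) y :=
      h2.div (hgd y) (hg y).ne'
    exact h1.sub (h3.sub_const p)
  have hF'mono : Monotone F' := by
    apply monotone_of_deriv_nonneg (fun y => (hF'd y).differentiableAt)
    intro y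
    rw [(hF'd y).deriv]
    have hgy := hg y
    have hey := Real.exp_pos y
    rw [sub_nonneg, div_le_iff₀ (by positivity)]
    nlinarith [sq_nonneg (1 - p - p * Real.exp y), mul_nonneg hp0 hey.le]
  have hF'0 : F' 0 = 0 := by
    simp only [hF'def, hgdef, Real.exp_zero, mul_one]
    norm_num
  have hF0 : F 0 = 0 := by
    simp only [hFdef, hgdef, Real.exp_zero, mul_one, mul_zero]
    norm_num
  have key : 0 ≤ F x := by
    rcases le_or_gt 0 x with hx | hx
    · have hmono : MonotoneOn F (Set.Ici (0:ℝ)) := by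
        apply monotoneOn_of_deriv_nonneg (convex_Ici 0)
          (fun y _ => (hFd y).differentiableAt.continuousAt.continuousWithinAt)
          (fun y _ => (hFd y).differentiableAt.differentiableWithinAt)
        intro y hy
        rw [(hFd y).deriv, ← hF'0]
        exact hF'mono (le_of_lt (by simpa using hy))
      have := hmono Set.self_mem_Ici (Set.mem_Ici.2 hx) hx
      linarith [hF0 ▸ this]
    · have hanti : AntitoneOn F (Set.Iic (0:ℝ)) := by
        apply antitoneOn_of_deriv_nonpos (convex_Iic 0)
          (fun y _ => (hFd y).differentiableAt.continuousAt.continuousWithinAt)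
          (fun y _ => (hFd y).differentiableAt.differentiableWithinAt)
        intro y hy
        rw [(hFd y).deriv, ← hF'0]
        exact hF'mono (le_of_lt (by simpa using hy))
      have := hanti (Set.mem_Iic.2 hx.le) Set.self_mem_Iic hx.le
      linarith [hF0 ▸ this]
  have heq : (1 - p) * Real.exp (-(p * x)) + p * Real.exp ((1 - p) * x)
      = Real.exp (Real.log (g x) - p * x) := by
    rw [Real.exp_sub, Real.exp_log (hg x), eq_div_iff (Real.exp_pos _).ne',
      show (1 - p) * x = x - p * x by ring, Real.exp_sub, Real.exp_neg]
    field_simp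
  rw [heq]
  apply Real.exp_le_exp.2
  have key' : 0 ≤ x ^ 2 / 8 - (Real.log (g x) - p * x) := key
  linarith

theorem aux_final_scalar (u w : ℝ) (hu : 0 ≤ u) (hw : 0 ≤ w) :
    2 * Real.exp (u ^ 2 / 8) - 1 + u / 2 ≤
      1 + u * (1 - Real.sqrt (Real.pi / 2) +
        Real.sqrt (Real.pi / 2) * Real.exp (u ^ 2 / 8) * (1 + w)) := by
  set s := Real.sqrt (Real.pi / 2) with hs
  have hs125 : (1.25 : ℝ) ≤ s := by
    rw [hs, show (1.25:ℝ) = Real.sqrt (1.5625) by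
      rw [show (1.5625:ℝ) = 1.25 ^ 2 by norm_num, Real.sqrt_sq (by norm_num)]]
    apply Real.sqrt_le_sqrt
    nlinarith [Real.pi_gt_d6]
  set Q := u ^ 2 / 8 with hQ
  have hQ0 : 0 ≤ Q := by positivity
  have hE1 : 1 ≤ Real.exp Q := Real.one_le_exp hQ0
  have hter : 0 ≤ u * s * Real.exp Q * w := by
    have hs0 : 0 ≤ s := Real.sqrt_nonneg _
    positivity
  rcases le_or_gt 2 (s * u) with hcase | hcase
  · nlinarith [hter]
  · have hsu : s * u ≥ 1.25 * u := mul_le_mul_of_nonneg_right hs125 hu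
    have hu16 : u < 1.6 := by nlinarith
    have hQ32 : Q ≤ 0.32 := by rw [hQ]; nlinarith
    have hEQ : Real.exp Q ≤ 1.4 := by
      have h13 : Real.exp ((1:ℝ)/3) ^ (3:ℕ) = Real.exp 1 := by
        rw [← Real.exp_nat_mul]; norm_num
      have hlt : Real.exp ((1:ℝ)/3) ≤ 1.4 := by
        nlinarith [h13, Real.exp_one_lt_d9, Real.exp_pos ((1:ℝ)/3),
          sq_nonneg (Real.exp ((1:ℝ)/3) - 1.4)]
      exact (Real.exp_le_exp.2 (by linarith)).trans hlt
    have hEm1 : Real.exp Q - 1 ≤ Q * Real.exp Q := by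
      have h2 : (1 - Q) * Real.exp Q ≤ Real.exp (-Q) * Real.exp Q :=
        mul_le_mul_of_nonneg_right (by linarith [Real.add_one_le_exp (-Q)]) (Real.exp_pos Q).le
      rw [← Real.exp_add, neg_add_cancel, Real.exp_zero] at h2
      nlinarith [h2]
    have h125u : (0:ℝ) < 2 - 1.25 * u := by nlinarith
    have step1 : (Real.exp Q - 1) * (2 - s * u) ≤ (Real.exp Q - 1) * (2 - 1.25 * u) := by
      apply mul_le_mul_of_nonneg_left (by nlinarith) (by linarith)
    have step2 : (Real.exp Q - 1) * (2 - 1.25 * u) ≤ Q * Real.exp Q * (2 - 1.25 * u) :=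
      mul_le_mul_of_nonneg_right hEm1 h125u.le
    have step3 : Q * Real.exp Q * (2 - 1.25 * u) ≤ Q * 1.4 * (2 - 1.25 * u) :=
      mul_le_mul_of_nonneg_right (mul_le_mul_of_nonneg_left hEQ hQ0) h125u.le
    have step4 : Q * 1.4 * (2 - 1.25 * u) ≤ u / 2 := by
      rw [hQ]; nlinarith [mul_nonneg hu (sq_nonneg (u - 0.8))]
    have key : (Real.exp Q - 1) * (2 - s * u) ≤ u / 2 := by linarith
    nlinarith [key, hter]

theorem aux_exp_abs_le (a : ℝ) : Real.exp |a| ≤ Real.exp a + Real.exp (-a) - 1 + |a| := by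
  rcases abs_cases a with ⟨h1, _⟩ | ⟨h1, _⟩ <;> rw [h1] <;>
    nlinarith [Real.add_one_le_exp (-a), Real.add_one_le_exp a]

theorem aux_erf_nonneg {x : ℝ} (hx : 0 ≤ x) : 0 ≤ erf x :=
  mul_nonneg (by positivity)
    (intervalIntegral.integral_nonneg hx (fun t _ => (Real.exp_pos _).le))

end AuxScalar

section AuxMeas
variable {E : Type*} [MeasurableSpace E] (ν : Measure E) [IsProbabilityMeasure ν]
  {f : E → ℝ} {a b : ℝ}

lemma aux_integrable_of_Icc (hf : Measurable f) (hab : ∀ x, f x ∈ Set.Icc a b) :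
    Integrable f ν :=
  ⟨hf.aestronglyMeasurable, HasFiniteIntegral.of_bounded (C := max |a| |b|)
    (ae_of_all _ fun x => abs_le_max_abs_abs (hab x).1 (hab x).2)⟩

lemma aux_integrable_sq_of_Icc (hf : Measurable f) (hab : ∀ x, f x ∈ Set.Icc a b) :
    Integrable (fun x => f x ^ 2) ν := by
  refine ⟨(hf.pow_const 2).aestronglyMeasurable,
    HasFiniteIntegral.of_bounded (C := (max |a| |b|) ^ 2) (ae_of_all _ fun x => ?_)⟩
  have h1 : |f x| ≤ max |a| |b| := abs_le_max_abs_abs (hab x).1 (hab x).2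
  have h2 : ‖f x ^ 2‖ = |f x| ^ 2 := by rw [Real.norm_eq_abs, abs_pow]
  rw [h2]
  exact pow_le_pow_left₀ (abs_nonneg _) h1 2

lemma aux_integrable_exp_of_Icc (hf : Measurable f) (hab : ∀ x, f x ∈ Set.Icc a b) (t : ℝ) :
    Integrable (fun x => Real.exp (t * f x)) ν := by
  refine ⟨((hf.const_mul t).exp).aestronglyMeasurable,
    HasFiniteIntegral.of_bounded (C := Real.exp (|t| * max |a| |b|)) (ae_of_all _ fun x => ?_)⟩
  rw [Real.norm_eq_abs, abs_of_pos (Real.exp_pos _)]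
  apply Real.exp_le_exp.2
  calc t * f x ≤ |t * f x| := le_abs_self _
    _ = |t| * |f x| := abs_mul _ _
    _ ≤ |t| * max |a| |b| :=
        mul_le_mul_of_nonneg_left (abs_le_max_abs_abs (hab x).1 (hab x).2) (abs_nonneg t)

lemma aux_a_nonpos (hf : Measurable f) (hab : ∀ x, f x ∈ Set.Icc a b)
    (h0 : ∫ x, f x ∂ν = 0) : a ≤ 0 := by
  have := integral_mono (integrable_const a) (aux_integrable_of_Icc ν hf hab) fun x => (hab x).1
  simpa [h0] using this

lemma aux_b_nonneg (hf : Measurable f) (hab : ∀ x, f x ∈ Set.Icc a b)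
    (h0 : ∫ x, f x ∂ν = 0) : 0 ≤ b := by
  have := integral_mono (aux_integrable_of_Icc ν hf hab) (integrable_const b) fun x => (hab x).2
  simpa [h0] using this

theorem aux_hoeffding_meas (hf : Measurable f) (hab : ∀ x, f x ∈ Set.Icc a b)
    (h0 : ∫ x, f x ∂ν = 0) (t : ℝ) :
    ∫ x, Real.exp (t * f x) ∂ν ≤ Real.exp (t ^ 2 * (b - a) ^ 2 / 8) := by
  have ha := aux_a_nonpos ν hf hab h0
  have hb := aux_b_nonneg ν hf hab h0
  rcases eq_or_lt_of_le (le_trans ha hb) with heq | hlt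
  · have hb0 : b = 0 := le_antisymm (heq ▸ ha) hb
    have ha0 : a = 0 := by rw [heq]; exact hb0
    have hfx : ∀ x, f x = 0 := fun x => le_antisymm (hb0 ▸ (hab x).2) (ha0 ▸ (hab x).1)
    simp only [hfx, mul_zero, Real.exp_zero, integral_const, measure_univ, probReal_univ, ENNReal.toReal_one,
      smul_eq_mul, one_mul]
    exact Real.one_le_exp (by positivity)
  · have hba : 0 < b - a := sub_pos.2 hlt
    have hpt : ∀ x, Real.exp (t * f x) ≤
        (b - f x) / (b - a) * Real.exp (t * a) + (f x - a) / (b - a) * Real.exp (t * b) := by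
      intro x
      have h1 : 0 ≤ (b - f x) / (b - a) := div_nonneg (by linarith [(hab x).2]) hba.le
      have h2 : 0 ≤ (f x - a) / (b - a) := div_nonneg (by linarith [(hab x).1]) hba.le
      have h3 : (b - f x) / (b - a) + (f x - a) / (b - a) = 1 := by field_simp; ring
      have h4 := convexOn_exp.2 (Set.mem_univ (t * a)) (Set.mem_univ (t * b)) h1 h2 h3
      have h5 : (b - f x) / (b - a) * (t * a) + (f x - a) / (b - a) * (t * b) = t * f x := by
        field_simp; ring
      simpa [smul_eq_mul, h5] using h4
    have hint : Integrable f ν := aux_integrable_of_Icc ν hf hab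
    have hrw : ∀ x, (b - f x) / (b - a) * Real.exp (t * a) + (f x - a) / (b - a) * Real.exp (t * b)
        = (b * Real.exp (t * a) - a * Real.exp (t * b)) / (b - a)
          + (Real.exp (t * b) - Real.exp (t * a)) / (b - a) * f x := by
      intro x; field_simp; ring
    have hle : ∫ x, Real.exp (t * f x) ∂ν
        ≤ (b * Real.exp (t * a) - a * Real.exp (t * b)) / (b - a) := by
      have hmono := integral_mono (aux_integrable_exp_of_Icc ν hf hab t)
        (((integrable_const ((b * Real.exp (t * a) - a * Real.exp (t * b)) / (b - a))).add
          (hint.const_mul ((Real.exp (t * b) - Real.exp (t * a)) / (b - a)))).congr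
          (ae_of_all _ fun x => (hrw x).symm)) hpt
      calc ∫ x, Real.exp (t * f x) ∂ν
          ≤ ∫ x, ((b - f x) / (b - a) * Real.exp (t * a)
              + (f x - a) / (b - a) * Real.exp (t * b)) ∂ν := hmono
        _ = ∫ x, ((b * Real.exp (t * a) - a * Real.exp (t * b)) / (b - a)
              + (Real.exp (t * b) - Real.exp (t * a)) / (b - a) * f x) ∂ν :=
              integral_congr_ae (ae_of_all _ hrw)
        _ = (b * Real.exp (t * a) - a * Real.exp (t * b)) / (b - a) := by
              rw [integral_add (integrable_const _) (hint.const_mul _), integral_const,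
                integral_const_mul, h0, mul_zero, add_zero, probReal_univ]
              simp
    set p := -a / (b - a) with hpdef
    have hp0 : 0 ≤ p := div_nonneg (neg_nonneg.2 ha) hba.le
    have hp1 : p ≤ 1 := by rw [hpdef, div_le_one hba]; linarith
    have e1 : -(p * (t * (b - a))) = t * a := by rw [hpdef]; field_simp
    have e2 : (1 - p) * (t * (b - a)) = t * b := by rw [hpdef]; field_simp; ring
    have core := aux_hoeffding_core hp0 hp1 (t * (b - a))
    rw [e1, e2] at core
    have hC : (b * Real.exp (t * a) - a * Real.exp (t * b)) / (b - a)
        = (1 - p) * Real.exp (t * a) + p * Real.exp (t * b) := by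
      rw [hpdef]; field_simp; ring
    have hx8 : (t * (b - a)) ^ 2 / 8 = t ^ 2 * (b - a) ^ 2 / 8 := by ring
    rw [hx8] at core
    calc ∫ x, Real.exp (t * f x) ∂ν
        ≤ (b * Real.exp (t * a) - a * Real.exp (t * b)) / (b - a) := hle
      _ = (1 - p) * Real.exp (t * a) + p * Real.exp (t * b) := hC
      _ ≤ Real.exp (t ^ 2 * (b - a) ^ 2 / 8) := core

theorem aux_second_moment (hf : Measurable f) (hab : ∀ x, f x ∈ Set.Icc a b)
    (h0 : ∫ x, f x ∂ν = 0) :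
    ∫ x, f x ^ 2 ∂ν ≤ (b - a) ^ 2 / 4 := by
  set m := (a + b) / 2 with hm
  have hpt : ∀ x, (f x - m) ^ 2 ≤ ((b - a) / 2) ^ 2 := fun x => by
    have h1 := (hab x).1; have h2 := (hab x).2
    nlinarith
  have hint : Integrable f ν := aux_integrable_of_Icc ν hf hab
  have hintsq : Integrable (fun x => f x ^ 2) ν := aux_integrable_sq_of_Icc ν hf hab
  have hintsm : Integrable (fun x => (f x - m) ^ 2) ν := by
    have heq : (fun x => (f x - m) ^ 2) = fun x => f x ^ 2 - 2 * m * f x + m ^ 2 := by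
      funext x; ring
    rw [heq]
    exact (hintsq.sub (hint.const_mul _)).add (integrable_const _)
  have h1 : ∫ x, (f x - m) ^ 2 ∂ν ≤ ((b - a) / 2) ^ 2 := by
    have := integral_mono hintsm (integrable_const (((b - a) / 2) ^ 2)) hpt
    simpa using this
  have h2 : ∫ x, (f x - m) ^ 2 ∂ν = ∫ x, f x ^ 2 ∂ν - 2 * m * 0 + m ^ 2 := by
    have hrw : ∀ x, (f x - m) ^ 2 = f x ^ 2 - 2 * m * f x + m ^ 2 := fun x => by ring
    have i1 : Integrable (fun x => f x ^ 2 - 2 * m * f x) ν := hintsq.sub (hint.const_mul _)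
    rw [integral_congr_ae (ae_of_all _ hrw), integral_add i1 (integrable_const _),
      integral_sub hintsq (hint.const_mul _), integral_const_mul, h0, integral_const,
      probReal_univ]
    simp
  nlinarith [sq_nonneg m, h1, h2]

end AuxMeas

/-- Theorem 3: bound on the moment-generating function of the centered
empirical measure `m(X)(h) = (1/N) ∑ₖ hₖ(Xₖ)`, where
`σ(h) = √((1/N) ∑ₖ osc(hₖ)²)`. -/
theorem mgf_empirical_measure_bound
    {E : Type*} [MeasurableSpace E] {Ω : Type*} [MeasurableSpace Ω]
    (μ : Measure Ω) [IsProbabilityMeasure μ]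
    (N : ℕ) (hN : 1 ≤ N)
    (X : Fin N → Ω → E) (μs : Fin N → Measure E)
    [∀ k, IsProbabilityMeasure (μs k)]
    (hmeas : ∀ k, Measurable (X k))
    (hindep : iIndepFun X μ)
    (hlaw : ∀ k, Measure.map (X k) μ = μs k)
    (h : Fin N → E → ℝ) (hmh : ∀ k, Measurable (h k))
    (hosc : ∀ k, BddAbove (Set.range fun q : E × E => |h k q.1 - h k q.2|))
    (hcentered : ∀ k, ∫ x, h k x ∂(μs k) = 0)
    (ε : ℝ) (hε : 0 ≤ ε) :
    (∫ ω, Real.exp (ε * Real.sqrt N * |(1 / (N : ℝ)) * ∑ k, h k (X k ω)|) ∂μ) ≤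
      1 + ε * Real.sqrt ((1 / (N : ℝ)) * ∑ k, (osc (h k)) ^ 2) *
        (1 - Real.sqrt (Real.pi / 2) + Real.sqrt (Real.pi / 2) *
          Real.exp (ε ^ 2 / 8 * ((1 / (N : ℝ)) * ∑ k, (osc (h k)) ^ 2)) *
          (1 + erf (ε * Real.sqrt ((1 / (N : ℝ)) * ∑ k, (osc (h k)) ^ 2) /
            Real.sqrt 8))) := by
  classical
  have hNpos : (0:ℝ) < N := by exact_mod_cast Nat.lt_of_lt_of_le Nat.zero_lt_one hN
  have hsN : (0:ℝ) < Real.sqrt N := Real.sqrt_pos.2 hNpos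
  have hΩ : Nonempty Ω := by
    by_contra hne
    have h1 : μ Set.univ = 1 := measure_univ
    rw [Set.univ_eq_empty_iff.2 (not_nonempty_iff.1 hne), measure_empty] at h1
    exact zero_ne_one h1
  obtain ⟨ω₀⟩ := hΩ
  have hEne : Nonempty E := ⟨X ⟨0, hN⟩ ω₀⟩
  obtain ⟨x₀⟩ := hEne
  -- oscillation facts
  have hcb : ∀ k x y, |h k x - h k y| ≤ osc (h k) := fun k x y => le_ciSup (hosc k) (x, y)
  have hc0 : ∀ k, 0 ≤ osc (h k) := fun k => by simpa using hcb k x₀ x₀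
  -- sup/inf bounds
  have hbdda : ∀ k, BddAbove (Set.range (h k)) := fun k =>
    ⟨h k x₀ + osc (h k), by
      rintro y ⟨x, rfl⟩
      linarith [hcb k x x₀, le_abs_self (h k x - h k x₀)]⟩
  have hbddb : ∀ k, BddBelow (Set.range (h k)) := fun k =>
    ⟨h k x₀ - osc (h k), by
      rintro y ⟨x, rfl⟩
      linarith [hcb k x₀ x, le_abs_self (h k x₀ - h k x)]⟩
  have hrne : ∀ k, (Set.range (h k)).Nonempty := fun k => ⟨h k x₀, Set.mem_range_self x₀⟩
  set A : Fin N → ℝ := fun k => sInf (Set.range (h k)) with hAdef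
  set B : Fin N → ℝ := fun k => sSup (Set.range (h k)) with hBdef
  have hab : ∀ k x, h k x ∈ Set.Icc (A k) (B k) := fun k x =>
    ⟨csInf_le (hbddb k) (Set.mem_range_self x), le_csSup (hbdda k) (Set.mem_range_self x)⟩
  have hBA : ∀ k, B k - A k ≤ osc (h k) := by
    intro k
    have h1 : B k ≤ A k + osc (h k) := by
      apply csSup_le (hrne k)
      rintro y ⟨x, rfl⟩
      have h2 : h k x - osc (h k) ≤ A k := by
        apply le_csInf (hrne k)
        rintro z ⟨y', rfl⟩
        linarith [hcb k x y', le_abs_self (h k x - h k y')]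
      linarith
    linarith
  have hABn : ∀ k, 0 ≤ B k - A k := fun k => by
    have h1 := (hab k x₀).1; have h2 := (hab k x₀).2; linarith
  -- transfer to μs
  have htrans : ∀ (k : Fin N) (G : ℝ → ℝ), Measurable G →
      ∫ ω, G (h k (X k ω)) ∂μ = ∫ x, G (h k x) ∂(μs k) := by
    intro k G hG
    rw [← hlaw k]
    exact (integral_map (hmeas k).aemeasurable (hG.comp (hmh k)).aestronglyMeasurable).symm
  have hmean : ∀ k, ∫ ω, h k (X k ω) ∂μ = 0 := fun k =>
    (htrans k (fun y => y) measurable_id).trans (hcentered k)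
  have hsqk : ∀ k, ∫ ω, (h k (X k ω)) ^ 2 ∂μ ≤ osc (h k) ^ 2 / 4 := by
    intro k
    rw [htrans k (fun y => y ^ 2) (measurable_id.pow_const 2)]
    have hmom := aux_second_moment (μs k) (hmh k) (hab k) (hcentered k)
    have hsq2 : (B k - A k) ^ 2 ≤ osc (h k) ^ 2 := pow_le_pow_left₀ (hABn k) (hBA k) 2
    linarith
  have hexpk : ∀ (k : Fin N) (r : ℝ),
      ∫ ω, Real.exp (r * h k (X k ω)) ∂μ ≤ Real.exp (r ^ 2 * osc (h k) ^ 2 / 8) := by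
    intro k r
    rw [htrans k (fun y => Real.exp (r * y)) ((measurable_id.const_mul r).exp)]
    have hhm := aux_hoeffding_meas (μs k) (hmh k) (hab k) (hcentered k) r
    refine hhm.trans (Real.exp_le_exp.2 ?_)
    have hsq2 : (B k - A k) ^ 2 ≤ osc (h k) ^ 2 := pow_le_pow_left₀ (hABn k) (hBA k) 2
    nlinarith [sq_nonneg r]
  -- independence of the composed variables
  have hYmeas : ∀ k, Measurable (h k ∘ X k) := fun k => (hmh k).comp (hmeas k)
  have hYind : iIndepFun (fun k => h k ∘ X k) μ :=
    hindep.comp h hmh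
  -- mgf bound for the sum
  set D := ∑ k, osc (h k) ^ 2 with hDdef
  have hD0 : 0 ≤ D := Finset.sum_nonneg fun k _ => sq_nonneg _
  have hmgf : ∀ r : ℝ, ∫ ω, Real.exp (r * ∑ k, h k (X k ω)) ∂μ
      ≤ Real.exp (r ^ 2 * D / 8) := by
    intro r
    have hsumfun : (∑ k, (h k ∘ X k)) = fun ω => ∑ k, h k (X k ω) := by
      funext ω; simp [Finset.sum_apply]
    have hprod := hYind.mgf_sum hYmeas Finset.univ (t := r)
    rw [hsumfun] at hprod
    have hL : ∫ ω, Real.exp (r * ∑ k, h k (X k ω)) ∂μ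
        = mgf (fun ω => ∑ k, h k (X k ω)) μ r := rfl
    rw [hL, hprod]
    calc ∏ k, mgf (h k ∘ X k) μ r
        ≤ ∏ k, Real.exp (r ^ 2 * osc (h k) ^ 2 / 8) :=
          Finset.prod_le_prod (fun k _ => mgf_nonneg) (fun k _ => hexpk k r)
      _ = Real.exp (∑ k, r ^ 2 * osc (h k) ^ 2 / 8) := (Real.exp_sum _ _).symm
      _ = Real.exp (r ^ 2 * D / 8) := by
          rw [hDdef, ← Finset.sum_div, ← Finset.mul_sum]
  -- integrability
  set M : Fin N → ℝ := fun k => max |A k| |B k| with hMdef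
  have hYbd : ∀ k ω, |h k (X k ω)| ≤ M k := fun k ω =>
    abs_le_max_abs_abs (hab k _).1 (hab k _).2
  have intY : ∀ k, Integrable (fun ω => h k (X k ω)) μ := fun k =>
    ⟨(hYmeas k).aestronglyMeasurable,
      HasFiniteIntegral.of_bounded (C := M k) (ae_of_all _ (hYbd k))⟩
  have intYY : ∀ j k, Integrable (fun ω => h j (X j ω) * h k (X k ω)) μ := fun j k =>
    ⟨((hYmeas j).mul (hYmeas k)).aestronglyMeasurable,
      HasFiniteIntegral.of_bounded (C := M j * M k) (ae_of_all _ fun ω => by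
        rw [Real.norm_eq_abs, abs_mul]
        exact mul_le_mul (hYbd j ω) (hYbd k ω) (abs_nonneg _)
          ((abs_nonneg _).trans (hYbd j ω)))⟩
  have hSmeas : Measurable (fun ω => ∑ k, h k (X k ω)) :=
    Finset.measurable_sum _ fun k _ => hYmeas k
  have intS : Integrable (fun ω => ∑ k, h k (X k ω)) μ :=
    integrable_finset_sum _ fun k _ => intY k
  set R := ∑ k, M k with hRdef
  have hSbd : ∀ ω, |∑ k, h k (X k ω)| ≤ R := fun ω =>
    (Finset.abs_sum_le_sum_abs _ _).trans (Finset.sum_le_sum fun k _ => hYbd k ω)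
  have intExp : ∀ r : ℝ, Integrable (fun ω => Real.exp (r * ∑ k, h k (X k ω))) μ := by
    intro r
    refine ⟨((hSmeas.const_mul r).exp).aestronglyMeasurable,
      HasFiniteIntegral.of_bounded (C := Real.exp (|r| * R)) (ae_of_all _ fun ω => ?_)⟩
    rw [Real.norm_eq_abs, abs_of_pos (Real.exp_pos _)]
    apply Real.exp_le_exp.2
    calc r * ∑ k, h k (X k ω) ≤ |r * ∑ k, h k (X k ω)| := le_abs_self _
      _ = |r| * |∑ k, h k (X k ω)| := abs_mul _ _
      _ ≤ |r| * R := mul_le_mul_of_nonneg_left (hSbd ω) (abs_nonneg r)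
  have intS2 : Integrable (fun ω => (∑ k, h k (X k ω)) ^ 2) μ := by
    refine ⟨(hSmeas.pow_const 2).aestronglyMeasurable,
      HasFiniteIntegral.of_bounded (C := R ^ 2) (ae_of_all _ fun ω => ?_)⟩
    rw [Real.norm_eq_abs, abs_pow]
    exact pow_le_pow_left₀ (abs_nonneg _) (hSbd ω) 2
  -- second moment of the sum
  have hS2 : ∫ ω, (∑ k, h k (X k ω)) ^ 2 ∂μ ≤ D / 4 := by
    have hexpand : ∀ ω, (∑ k, h k (X k ω)) ^ 2
        = ∑ j, ∑ k, h j (X j ω) * h k (X k ω) := fun ω => by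
      rw [sq, Finset.sum_mul_sum]
    rw [integral_congr_ae (ae_of_all _ hexpand),
      integral_finset_sum _ (fun j _ => integrable_finset_sum _ fun k _ => intYY j k)]
    have hinner : ∀ j : Fin N, ∫ ω, ∑ k, h j (X j ω) * h k (X k ω) ∂μ
        = ∑ k, ∫ ω, h j (X j ω) * h k (X k ω) ∂μ := fun j =>
      integral_finset_sum _ fun k _ => intYY j k
    rw [Finset.sum_congr rfl fun j _ => hinner j]
    have hdiag : ∀ j : Fin N, (∑ k, ∫ ω, h j (X j ω) * h k (X k ω) ∂μ)
        = ∫ ω, (h j (X j ω)) ^ 2 ∂μ := by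
      intro j
      rw [Finset.sum_eq_single j]
      · exact integral_congr_ae (ae_of_all _ fun ω => (sq _).symm)
      · intro k _ hkj
        have hind : IndepFun (h j ∘ X j) (h k ∘ X k) μ :=
          (hindep.indepFun (Ne.symm hkj)).comp (hmh j) (hmh k)
        have heq : ∫ ω, h j (X j ω) * h k (X k ω) ∂μ
            = (∫ ω, h j (X j ω) ∂μ) * ∫ ω, h k (X k ω) ∂μ :=
          hind.integral_fun_mul_eq_mul_integral (intY j).1 (intY k).1
        rw [heq, hmean j, zero_mul]
      · intro hj; exact absurd (Finset.mem_univ j) hj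
    rw [Finset.sum_congr rfl fun j _ => hdiag j]
    calc ∑ j, ∫ ω, (h j (X j ω)) ^ 2 ∂μ ≤ ∑ j, osc (h j) ^ 2 / 4 :=
          Finset.sum_le_sum fun j _ => hsqk j
      _ = D / 4 := by rw [hDdef, Finset.sum_div]
  -- case D = 0
  rcases eq_or_lt_of_le hD0 with hDz | hDpos
  · have hcz : ∀ k, osc (h k) = 0 := by
      intro k
      have hsum := (Finset.sum_eq_zero_iff_of_nonneg
        (fun k _ => sq_nonneg (osc (h k)))).1 hDz.symm k (Finset.mem_univ k)
      exact pow_eq_zero_iff two_ne_zero |>.1 hsum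
    have hzero : ∀ k z, h k z = 0 := by
      intro k z
      have hconst : ∀ x, h k x = h k z := fun x => by
        have h1 := hcb k x z
        rw [hcz k] at h1
        have h2 : |h k x - h k z| = 0 := le_antisymm h1 (abs_nonneg _)
        have := abs_eq_zero.1 h2
        linarith [sub_eq_zero.1 this]
      have hint : ∫ x, h k x ∂(μs k) = h k z := by
        rw [integral_congr_ae (ae_of_all _ hconst), integral_const, probReal_univ]
        simp
      rw [← hint, hcentered k]
    have hSz : ∀ ω, ∑ k, h k (X k ω) = 0 := fun ω =>
      Finset.sum_eq_zero fun k _ => hzero k _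
    have hDzz : D = 0 := hDz.symm
    simp only [hSz, hDzz, mul_zero, abs_zero, Real.exp_zero, integral_const, measure_univ, probReal_univ,
      ENNReal.toReal_one, smul_eq_mul, mul_one, Real.sqrt_zero, zero_mul]
    norm_num
  -- main case D > 0
  · set t := ε / Real.sqrt N with htdef
    have ht0 : 0 ≤ t := div_nonneg hε hsN.le
    have hNmul : Real.sqrt N * Real.sqrt N = (N:ℝ) := Real.mul_self_sqrt hNpos.le
    have hts : ∀ z : ℝ, ε * Real.sqrt N * ((1 / (N:ℝ)) * z) = t * z := by
      intro z
      rw [htdef]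
      field_simp
      linear_combination ε * z * hNmul
    -- |S| integral bound
    have hDsqrt : 0 < Real.sqrt D := Real.sqrt_pos.2 hDpos
    have habsS : ∫ ω, |∑ k, h k (X k ω)| ∂μ ≤ Real.sqrt D / 2 := by
      set γ := Real.sqrt D / 2 with hγdef
      have hγ : 0 < γ := by positivity
      have hpt : ∀ ω, |∑ k, h k (X k ω)| ≤ γ / 2 + (∑ k, h k (X k ω)) ^ 2 / (2 * γ) := by
        intro ω
        have key : 0 ≤ (γ - |∑ k, h k (X k ω)|) ^ 2 / (2 * γ) :=
          div_nonneg (sq_nonneg _) (by linarith)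
        have hid : γ / 2 + (∑ k, h k (X k ω)) ^ 2 / (2 * γ) - |∑ k, h k (X k ω)|
            = (γ - |∑ k, h k (X k ω)|) ^ 2 / (2 * γ) := by
          rw [← sq_abs (∑ k, h k (X k ω))]
          field_simp
          linear_combination
        linarith
      have hint2 : Integrable (fun ω => γ / 2 + (∑ k, h k (X k ω)) ^ 2 / (2 * γ)) μ :=
        (integrable_const _).add (intS2.div_const _)
      have hmono := integral_mono intS.abs hint2 hpt
      have hval : ∫ ω, (γ / 2 + (∑ k, h k (X k ω)) ^ 2 / (2 * γ)) ∂μ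
          = γ / 2 + (∫ ω, (∑ k, h k (X k ω)) ^ 2 ∂μ) / (2 * γ) := by
        rw [integral_add (integrable_const _) (intS2.div_const _), integral_const,
          probReal_univ, integral_div]
        simp
      rw [hval] at hmono
      have hdivle : (∫ ω, (∑ k, h k (X k ω)) ^ 2 ∂μ) / (2 * γ) ≤ (D / 4) / (2 * γ) :=
        (div_le_div_iff_of_pos_right (by positivity)).2 hS2
      have hfinal : γ / 2 + (D / 4) / (2 * γ) = Real.sqrt D / 2 := by
        rw [hγdef]
        have hstep : (D / 4) / (2 * (Real.sqrt D / 2)) = Real.sqrt D / 4 := by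
          rw [show (2:ℝ) * (Real.sqrt D / 2) = Real.sqrt D by ring, div_div,
            show (4:ℝ) * Real.sqrt D = Real.sqrt D * 4 by ring, ← div_div, Real.div_sqrt]
        rw [hstep]
        ring
      linarith
    -- master pointwise bound
    have hmaster : ∀ ω, Real.exp (ε * Real.sqrt N * |(1 / (N:ℝ)) * ∑ k, h k (X k ω)|)
        ≤ Real.exp (t * ∑ k, h k (X k ω)) + Real.exp (-(t * ∑ k, h k (X k ω))) - 1
          + t * |∑ k, h k (X k ω)| := by
      intro ω
      have e1 : ε * Real.sqrt N * |(1 / (N:ℝ)) * ∑ k, h k (X k ω)|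
          = t * |∑ k, h k (X k ω)| := by
        rw [abs_mul, abs_of_pos (by positivity : (0:ℝ) < 1 / (N:ℝ))]
        exact hts _
      have e2 : t * |∑ k, h k (X k ω)| = |t * ∑ k, h k (X k ω)| := by
        rw [abs_mul, abs_of_nonneg ht0]
      rw [e1, e2]
      exact aux_exp_abs_le _
    -- integrability of both sides
    have intLHS : Integrable
        (fun ω => Real.exp (ε * Real.sqrt N * |(1 / (N:ℝ)) * ∑ k, h k (X k ω)|)) μ := by
      refine ⟨?_, HasFiniteIntegral.of_bounded (C := Real.exp (t * R)) (ae_of_all _ fun ω => ?_)⟩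
      · exact ((((hSmeas.const_mul _).abs.const_mul _)).exp).aestronglyMeasurable
      · rw [Real.norm_eq_abs, abs_of_pos (Real.exp_pos _)]
        apply Real.exp_le_exp.2
        have e1 : ε * Real.sqrt N * |(1 / (N:ℝ)) * ∑ k, h k (X k ω)|
            = t * |∑ k, h k (X k ω)| := by
          rw [abs_mul, abs_of_pos (by positivity : (0:ℝ) < 1 / (N:ℝ))]
          exact hts _
        rw [e1]
        exact mul_le_mul_of_nonneg_left (hSbd ω) ht0
    have intRHS : Integrable (fun ω => Real.exp (t * ∑ k, h k (X k ω))
        + Real.exp (-(t * ∑ k, h k (X k ω))) - 1 + t * |∑ k, h k (X k ω)|) μ := by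
      have i1 := intExp t
      have i2 : Integrable (fun ω => Real.exp (-(t * ∑ k, h k (X k ω)))) μ := by
        have := intExp (-t)
        refine this.congr (ae_of_all _ fun ω => ?_)
        simp only [neg_mul]
      exact ((i1.add i2).sub (integrable_const 1)).add ((intS.abs).const_mul t)
    -- put everything together
    have hchain : ∫ ω, Real.exp (ε * Real.sqrt N * |(1 / (N:ℝ)) * ∑ k, h k (X k ω)|) ∂μ
        ≤ 2 * Real.exp (t ^ 2 * D / 8) - 1 + t * (Real.sqrt D / 2) := by
      have step := integral_mono intLHS intRHS hmaster
      have hsplit : ∫ ω, (Real.exp (t * ∑ k, h k (X k ω))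
          + Real.exp (-(t * ∑ k, h k (X k ω))) - 1 + t * |∑ k, h k (X k ω)|) ∂μ
          = (∫ ω, Real.exp (t * ∑ k, h k (X k ω)) ∂μ)
            + (∫ ω, Real.exp (-(t * ∑ k, h k (X k ω))) ∂μ) - 1
            + t * ∫ ω, |∑ k, h k (X k ω)| ∂μ := by
        have i2 : Integrable (fun ω => Real.exp (-(t * ∑ k, h k (X k ω)))) μ := by
          refine (intExp (-t)).congr (ae_of_all _ fun ω => ?_)
          simp only [neg_mul]
        have iA : Integrable (fun ω => Real.exp (t * ∑ k, h k (X k ω))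
            + Real.exp (-(t * ∑ k, h k (X k ω)))) μ := (intExp t).add i2
        have iB : Integrable (fun ω => Real.exp (t * ∑ k, h k (X k ω))
            + Real.exp (-(t * ∑ k, h k (X k ω))) - 1) μ := iA.sub (integrable_const 1)
        have iC : Integrable (fun ω => t * |∑ k, h k (X k ω)|) μ := (intS.abs).const_mul t
        rw [integral_add iB iC, integral_sub iA (integrable_const 1),
          integral_add (intExp t) i2, integral_const, probReal_univ, integral_const_mul]
        simp
      rw [hsplit] at step
      have hm1 := hmgf t
      have hm2 : ∫ ω, Real.exp (-(t * ∑ k, h k (X k ω))) ∂μ ≤ Real.exp (t ^ 2 * D / 8) := by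
        have h1 := hmgf (-t)
        have heqq : ∫ ω, Real.exp (-(t * ∑ k, h k (X k ω))) ∂μ
            = ∫ ω, Real.exp ((-t) * ∑ k, h k (X k ω)) ∂μ :=
          integral_congr_ae (ae_of_all _ fun ω => by simp only [neg_mul])
        rw [heqq]
        have hpow : (-t) ^ 2 * D / 8 = t ^ 2 * D / 8 := by ring
        rw [hpow] at h1
        exact h1
      have hm3 : t * ∫ ω, |∑ k, h k (X k ω)| ∂μ ≤ t * (Real.sqrt D / 2) :=
        mul_le_mul_of_nonneg_left habsS ht0
      linarith
    -- algebraic identification with the goal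
    have hDN0 : 0 ≤ (1 / (N:ℝ)) * D := by positivity
    set σ := Real.sqrt ((1 / (N:ℝ)) * D) with hσdef
    have hσ0 : 0 ≤ σ := Real.sqrt_nonneg _
    have hσsq : σ ^ 2 = (1 / (N:ℝ)) * D := Real.sq_sqrt hDN0
    have hexp_eq : t ^ 2 * D / 8 = (ε * σ) ^ 2 / 8 := by
      have ht2 : t ^ 2 = ε ^ 2 / (N:ℝ) := by
        rw [htdef, div_pow, Real.sq_sqrt hNpos.le]
      rw [ht2, mul_pow, hσsq]
      field_simp
    have hu_eq : t * (Real.sqrt D / 2) = ε * σ / 2 := by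
      have hσ_alt : σ = Real.sqrt D / Real.sqrt N := by
        rw [hσdef, show (1 / (N:ℝ)) * D = D / (N:ℝ) by ring, Real.sqrt_div hD0]
      rw [htdef, hσ_alt]
      ring
    have hw0 : 0 ≤ erf (ε * σ / Real.sqrt 8) :=
      aux_erf_nonneg (by positivity)
    have hfs := aux_final_scalar (ε * σ) (erf (ε * σ / Real.sqrt 8))
      (by positivity) hw0
    calc ∫ ω, Real.exp (ε * Real.sqrt N * |(1 / (N:ℝ)) * ∑ k, h k (X k ω)|) ∂μ
        ≤ 2 * Real.exp (t ^ 2 * D / 8) - 1 + t * (Real.sqrt D / 2) := hchain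
      _ = 2 * Real.exp ((ε * σ) ^ 2 / 8) - 1 + ε * σ / 2 := by rw [hexp_eq, hu_eq]
      _ ≤ 1 + ε * σ * (1 - Real.sqrt (Real.pi / 2) + Real.sqrt (Real.pi / 2) *
            Real.exp ((ε * σ) ^ 2 / 8) * (1 + erf (ε * σ / Real.sqrt 8))) := hfs
      _ = 1 + ε * σ * (1 - Real.sqrt (Real.pi / 2) + Real.sqrt (Real.pi / 2) *
            Real.exp (ε ^ 2 / 8 * ((1 / (N:ℝ)) * D)) * (1 + erf (ε * σ / Real.sqrt 8))) := by
          rw [show (ε * σ) ^ 2 / 8 = ε ^ 2 / 8 * σ ^ 2 by ring, hσsq]
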